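/- With the conventions above (T^{(1)}_0 = 1, T^{(1)}_{ℓ<0} = 0, T^{(a)}_1 = 0 for a ≥ n+2 or a < 0, T^{(0)}_1 = 1), define T^{(a)}_ℓ(λ) = T_μ(λ) for μ the a×ℓ rectangular Young diagram via the quantum Jacobi-Trudi formula. Then the T-system holds: T^{(a)}_ℓ(λ q^{1/2}) T^{(a)}_ℓ(λ q^{−1/2}) = T^{(a)}_{ℓ+1}(λ) T^{(a)}_{ℓ−1}(λ) + T^{(a+1)}_ℓ(λ) T^{(a−1)}_ℓ(λ) for 1 ≤ a ≤ n, with T^{(a)}_ℓ = 1 whenever a = 0 or ℓ = 0. -/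

import Mathlib

open Matrix Polynomial

/-- The middle embedding `Fin m → Fin (m+2)`, `i ↦ i + 1`. -/
private def mid (m : ℕ) : Fin m → Fin (m + 2) := fun i => i.succ.castSucc

private lemma cof_zero {R : Type*} [CommRing R] {m : ℕ}
    (A : Matrix (Fin (m + 2)) (Fin (m + 2)) R) (i : Fin (m + 2)) :
    adjugate A i 0 = (-1) ^ (i : ℕ) * (A.submatrix Fin.succ i.succAbove).det := by
  rw [adjugate_apply, det_succ_row_zero]
  rw [Finset.sum_eq_single i]
  · have h1 : (A.updateRow 0 (Pi.single i 1)) 0 i = 1 := by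
      rw [Matrix.updateRow_self]; exact Pi.single_eq_same i 1
    have h2 : (A.updateRow 0 (Pi.single i 1)).submatrix Fin.succ i.succAbove
        = A.submatrix Fin.succ i.succAbove := by
      ext a b
      simp [Matrix.submatrix_apply, Matrix.updateRow_ne (Fin.succ_ne_zero a)]
    rw [h1, h2, mul_one]
  · intro j _ hj
    have h1 : (A.updateRow 0 (Pi.single i 1)) 0 j = 0 := by
      rw [Matrix.updateRow_self]; exact Pi.single_eq_of_ne hj 1
    rw [h1]; ring
  · intro h; exact absurd (Finset.mem_univ i) h

private lemma cof_last {R : Type*} [CommRing R] {m : ℕ}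
    (A : Matrix (Fin (m + 2)) (Fin (m + 2)) R) (i : Fin (m + 2)) :
    adjugate A i (Fin.last (m + 1)) =
      (-1) ^ (m + 1 + (i : ℕ)) * (A.submatrix Fin.castSucc i.succAbove).det := by
  rw [adjugate_apply, det_succ_row _ (Fin.last (m + 1))]
  rw [Finset.sum_eq_single i]
  · have h1 : (A.updateRow (Fin.last (m + 1)) (Pi.single i 1)) (Fin.last (m + 1)) i = 1 := by
      rw [Matrix.updateRow_self]; exact Pi.single_eq_same i 1
    have h2 : (A.updateRow (Fin.last (m + 1)) (Pi.single i 1)).submatrix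
        (Fin.last (m + 1)).succAbove i.succAbove = A.submatrix Fin.castSucc i.succAbove := by
      rw [Fin.succAbove_last]
      ext a b
      simp [Matrix.submatrix_apply, Matrix.updateRow_ne (Fin.castSucc_lt_last a).ne]
    rw [h1, h2, mul_one, Fin.val_last]
  · intro j _ hj
    have h1 : (A.updateRow (Fin.last (m + 1)) (Pi.single i 1)) (Fin.last (m + 1)) j = 0 := by
      rw [Matrix.updateRow_self]; exact Pi.single_eq_of_ne hj 1
    rw [h1]; ring
  · intro h; exact absurd (Finset.mem_univ i) h

private lemma dj_aux {R : Type*} [CommRing R] {m : ℕ}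
    (A : Matrix (Fin (m + 2)) (Fin (m + 2)) R) :
    A.det * ((A.submatrix Fin.succ Fin.succ).det * (A.submatrix Fin.castSucc Fin.castSucc).det
      - (A.submatrix Fin.castSucc Fin.succ).det * (A.submatrix Fin.succ Fin.castSucc).det)
    = A.det * (A.det * (A.submatrix (mid m) (mid m)).det) := by
  set B := adjugate A with hB
  set L : Fin (m + 2) := Fin.last (m + 1) with hL
  have hL0 : L ≠ 0 := by
    simp [hL, Fin.ext_iff]
  set C : Matrix (Fin (m + 2)) (Fin (m + 2)) R :=
    Matrix.of (fun j k => if k = 0 then B j 0 else if k = L then B j L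
      else if j = k then 1 else 0) with hC
  -- determinant of C via Weinstein–Aronszajn
  have hdetC : C.det = B 0 0 * B L L - B 0 L * B L 0 := by
    set U : Matrix (Fin (m + 2)) (Fin 2) R :=
      Matrix.of (fun j t => if t = 0 then B j 0 - (if j = 0 then 1 else 0)
        else B j L - (if j = L then 1 else 0)) with hU
    set V : Matrix (Fin 2) (Fin (m + 2)) R :=
      Matrix.of (fun t k => if t = 0 then (if k = 0 then 1 else 0)
        else (if k = L then 1 else 0)) with hV
    have hCUV : C = 1 + U * V := by
      ext j k
      rw [Matrix.add_apply, Matrix.mul_apply, Fin.sum_univ_two]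
      by_cases h0 : k = 0
      · subst h0
        simp [hC, hU, hV, Matrix.one_apply, hL0.symm]
      · by_cases hl : k = L
        · subst hl
          simp [hC, hU, hV, Matrix.one_apply, hL0, h0]
        · simp [hC, hU, hV, Matrix.one_apply, h0, hl]
    have hVU : (1 : Matrix (Fin 2) (Fin 2) R) + V * U =
        !![B 0 0, B 0 L; B L 0, B L L] := by
      ext t t'
      fin_cases t <;> fin_cases t' <;>
        simp [hU, hV, Matrix.mul_apply, Matrix.one_apply, ite_mul,
          Finset.sum_ite_eq', hL0, hL0.symm]
    rw [hCUV, Matrix.det_one_add_mul_comm, hVU, Matrix.det_fin_two_of]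
  -- the product A * C
  set D : Matrix (Fin (m + 2)) (Fin (m + 2)) R :=
    Matrix.of (fun j k => if k = 0 then A.det * (if j = 0 then 1 else 0)
      else if k = L then A.det * (if j = L then 1 else 0) else A j k) with hD
  have hAC : A * C = D := by
    ext j k
    rw [Matrix.mul_apply]
    by_cases h0 : k = 0
    · subst h0
      have h1 : ∑ i, A j i * C i 0 = (A * B) j 0 := by
        rw [Matrix.mul_apply]
        exact Finset.sum_congr rfl fun i _ => by simp [hC]
      rw [h1, hB, Matrix.mul_adjugate]
      simp [hD, Matrix.one_apply]
    · by_cases hl : k = L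
      · subst hl
        have h1 : ∑ i, A j i * C i L = (A * B) j L := by
          rw [Matrix.mul_apply]
          exact Finset.sum_congr rfl fun i _ => by simp [hC, hL0]
        rw [h1, hB, Matrix.mul_adjugate]
        simp [hD, Matrix.one_apply, hL0, h0]
      · have h1 : ∀ i, A j i * C i k = if i = k then A j i else 0 := fun i => by
          by_cases hik : i = k <;> simp [hC, h0, hl, hik]
        rw [Finset.sum_congr rfl fun i _ => h1 i]
        simp [hD, h0, hl, Finset.sum_ite_eq']
  -- determinant of D
  have hE : (D.submatrix Fin.succ Fin.succ).submatrix Fin.castSucc Fin.castSucc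
      = A.submatrix (mid m) (mid m) := by
    ext i k
    have hklt := k.is_lt
    have hk0 : (k.succ.castSucc : Fin (m + 2)) ≠ 0 := by
      refine Fin.ne_of_val_ne ?_
      simp
    have hkL : (k.succ.castSucc : Fin (m + 2)) ≠ L := by
      rw [hL]
      refine Fin.ne_of_val_ne ?_
      simp only [Fin.coe_castSucc, Fin.val_succ, Fin.val_last]
      omega
    simp [hD, mid, hk0, hkL, Fin.succ_castSucc, -Fin.castSucc_succ]
  have hsuccL : (Fin.last m).succ = L := by rw [hL]; exact Fin.succ_last m
  have hdetD : D.det = A.det * (A.det * (A.submatrix (mid m) (mid m)).det) := by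
    rw [det_succ_column_zero]
    rw [Finset.sum_eq_single_of_mem 0 (Finset.mem_univ _)
      (fun i _ hi => by simp [hD, hi])]
    have hD00 : D 0 0 = A.det := by simp [hD]
    rw [hD00, Fin.succAbove_zero, Fin.val_zero, pow_zero, one_mul]
    congr 1
    -- E := D.submatrix Fin.succ Fin.succ, expand along last column
    rw [det_succ_column (D.submatrix Fin.succ Fin.succ) (Fin.last m)]
    rw [Finset.sum_eq_single_of_mem (Fin.last m) (Finset.mem_univ _)
      (fun i _ hi => by
        have hne : (i.succ : Fin (m + 2)) ≠ L := by
          rw [← hsuccL]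
          exact fun h => hi (Fin.succ_injective _ h)
        have h0 : (D.submatrix Fin.succ Fin.succ) i (Fin.last m) = 0 := by
          simp [hD, hsuccL, hL0, hne, Fin.succ_ne_zero]
        rw [h0]; ring)]
    have hent : (D.submatrix Fin.succ Fin.succ) (Fin.last m) (Fin.last m) = A.det := by
      simp [hD, hsuccL, hL0]
    rw [hent, Fin.succAbove_last, hE, Fin.val_last]
    have hmm : (-1 : R) ^ (m + m) = 1 := by
      rw [show m + m = 2 * m by ring, pow_mul]; norm_num
    rw [hmm, one_mul]
  -- cofactor values
  have hC2 : C.det =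
      (A.submatrix Fin.succ Fin.succ).det * (A.submatrix Fin.castSucc Fin.castSucc).det
        - (A.submatrix Fin.castSucc Fin.succ).det * (A.submatrix Fin.succ Fin.castSucc).det := by
    have e1 : B 0 0 = (A.submatrix Fin.succ Fin.succ).det := by
      rw [hB, cof_zero]
      simp [Fin.succAbove_zero]
    have e2 : B L L = (A.submatrix Fin.castSucc Fin.castSucc).det := by
      rw [hB, hL, cof_last, Fin.succAbove_last, Fin.val_last]
      have : (-1 : R) ^ (m + 1 + (m + 1)) = 1 := by
        rw [show m + 1 + (m + 1) = 2 * (m + 1) by ring, pow_mul]; norm_num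
      rw [this, one_mul]
    have e3 : B 0 L = (-1) ^ (m + 1) * (A.submatrix Fin.castSucc Fin.succ).det := by
      rw [hB, hL, cof_last]
      simp [Fin.succAbove_zero]
    have e4 : B L 0 = (-1) ^ (m + 1) * (A.submatrix Fin.succ Fin.castSucc).det := by
      rw [hB, hL, cof_zero, Fin.succAbove_last, Fin.val_last]
    have h3 : (-1 : R) ^ (m + 1) * (-1) ^ (m + 1) = 1 := by
      rw [← pow_add, show m + 1 + (m + 1) = 2 * (m + 1) by ring, pow_mul]; norm_num
    rw [hdetC, e1, e2, e3, e4]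
    linear_combination (-((A.submatrix Fin.castSucc Fin.succ).det *
      (A.submatrix Fin.succ Fin.castSucc).det)) * h3
  calc A.det * ((A.submatrix Fin.succ Fin.succ).det * (A.submatrix Fin.castSucc Fin.castSucc).det
      - (A.submatrix Fin.castSucc Fin.succ).det * (A.submatrix Fin.succ Fin.castSucc).det)
      = A.det * C.det := by rw [hC2]
    _ = (A * C).det := (det_mul A C).symm
    _ = D.det := by rw [hAC]
    _ = A.det * (A.det * (A.submatrix (mid m) (mid m)).det) := hdetD

/-- The Desnanot–Jacobi (Dodgson condensation / Plücker) identity. -/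
private lemma dj {R : Type*} [CommRing R] {m : ℕ}
    (A : Matrix (Fin (m + 2)) (Fin (m + 2)) R) :
    (A.submatrix Fin.succ Fin.succ).det * (A.submatrix Fin.castSucc Fin.castSucc).det
      = A.det * (A.submatrix (mid m) (mid m)).det
        + (A.submatrix Fin.castSucc Fin.succ).det * (A.submatrix Fin.succ Fin.castSucc).det := by
  -- lift to the polynomial ring where the determinant is a regular element
  set A' : Matrix (Fin (m + 2)) (Fin (m + 2)) R[X] := charmatrix (-A) with hA'
  have hmonic : A'.det.Monic := charpoly_monic (-A)
  have hkey := dj_aux A'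
  have h2 := hmonic.isRegular.left hkey
  have hmap : A'.map (evalRingHom (0 : R)) = A := by
    ext i j
    by_cases h : i = j
    · subst h
      simp [hA', charmatrix_apply_eq]
    · simp [hA', charmatrix_apply_ne _ _ _ h]
  have hdet : ∀ {k : ℕ} (r c : Fin k → Fin (m + 2)),
      (evalRingHom (0 : R)) (A'.submatrix r c).det = (A.submatrix r c).det := by
    intro k r c
    rw [RingHom.map_det, RingHom.mapMatrix_apply, ← Matrix.submatrix_map, hmap]
  have hdet' : (evalRingHom (0 : R)) A'.det = A.det := by
    rw [RingHom.map_det, RingHom.mapMatrix_apply, hmap]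
  have h3 := congrArg (evalRingHom (0 : R)) h2
  rw [RingHom.map_sub, RingHom.map_mul, RingHom.map_mul, RingHom.map_mul] at h3
  simp only [hdet, hdet'] at h3
  linear_combination h3

/-- The quantum Jacobi-Trudi determinant for the rectangular Young diagram of height `a`
and width `l` (paper eq. (qJTsym) with `η = ∅`, `μ` the `a × l` rectangle). -/
noncomputable def Trect (TL : ℤ → ℂ → ℂ) (s : ℂ) (a l : ℕ) (lam : ℂ) : ℂ :=
  Matrix.det (Matrix.of fun j k : Fin a =>
    TL ((l : ℤ) - (j : ℤ) + (k : ℤ)) (lam * s ^ ((j : ℤ) + (k : ℤ) + 1 - (a : ℤ))))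

/-- the `T`-system (paper eq. (tsys)) for the rectangular quantum
Jacobi-Trudi determinants, `1 ≤ a ≤ n`; it follows from the Plücker relation. -/
theorem stmt4 (n : ℕ) (s : ℂ) (hs : s ≠ 0)
    (TL T1 : ℤ → ℂ → ℂ)
    (hTL0 : ∀ lam, TL 0 lam = 1)
    (hTLneg : ∀ l : ℤ, l < 0 → ∀ lam, TL l lam = 0)
    (hT10 : ∀ lam, T1 0 lam = 1)
    (hT1neg : ∀ a : ℤ, a < 0 → ∀ lam, T1 a lam = 0)
    (hT1high : ∀ a : ℤ, (n : ℤ) + 2 ≤ a → ∀ lam, T1 a lam = 0)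
    (hT1det : ∀ a : ℕ, 1 ≤ a → ∀ lam, T1 (a : ℤ) lam =
      Matrix.det (Matrix.of fun i j : Fin a =>
        TL (1 - (i : ℤ) + (j : ℤ)) (lam * s ^ ((i : ℤ) + (j : ℤ) + 1 - (a : ℤ))))) :
    ∀ a l : ℕ, 1 ≤ a → a ≤ n → 1 ≤ l → ∀ lam : ℂ,
      Trect TL s a l (lam * s) * Trect TL s a l (lam * s⁻¹) =
        Trect TL s a (l + 1) lam * Trect TL s a (l - 1) lam +
          Trect TL s (a + 1) l lam * Trect TL s (a - 1) l lam := by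
  intro a l ha han hl lam
  obtain ⟨m, rfl⟩ : ∃ m, a = m + 1 := ⟨a - 1, by omega⟩
  obtain ⟨p, rfl⟩ : ∃ p, l = p + 1 := ⟨l - 1, by omega⟩
  have key1 : ∀ e : ℤ, lam * s * s ^ e = lam * s ^ (e + 1) := fun e => by
    rw [zpow_add_one₀ hs]; ring
  have key2 : ∀ e : ℤ, lam * s⁻¹ * s ^ e = lam * s ^ (e - 1) := fun e => by
    rw [show e - 1 = e + (-1) by ring, zpow_add₀ hs, _root_.zpow_neg_one]; ring
  have hTLc : ∀ (e1 e2 f1 f2 : ℤ), e1 = e2 → f1 = f2 →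
      TL e1 (lam * s ^ f1) = TL e2 (lam * s ^ f2) := by
    rintro e1 e2 f1 f2 rfl rfl; rfl
  set A : Matrix (Fin (m + 2)) (Fin (m + 2)) ℂ :=
    Matrix.of (fun j k : Fin (m + 2) =>
      TL (((p + 1 : ℕ) : ℤ) - (j : ℤ) + (k : ℤ))
        (lam * s ^ ((j : ℤ) + (k : ℤ) + 1 - ((m + 1 + 1 : ℕ) : ℤ)))) with hA
  have h6 : Trect TL s (m + 1 + 1) (p + 1) lam = A.det := rfl
  have h1 : Trect TL s (m + 1) (p + 1) (lam * s) = (A.submatrix Fin.succ Fin.succ).det := by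
    unfold Trect
    congr 1
    ext j k
    simp only [hA, Matrix.of_apply, Matrix.submatrix_apply, Fin.val_succ]
    rw [key1]
    exact hTLc _ _ _ _ (by push_cast; omega) (by push_cast; omega)
  have h2 : Trect TL s (m + 1) (p + 1) (lam * s⁻¹)
      = (A.submatrix Fin.castSucc Fin.castSucc).det := by
    unfold Trect
    congr 1
    ext j k
    simp only [hA, Matrix.of_apply, Matrix.submatrix_apply, Fin.coe_castSucc]
    rw [key2]
    exact hTLc _ _ _ _ (by push_cast; omega) (by push_cast; omega)
  have h3 : Trect TL s (m + 1) (p + 1 + 1) lam = (A.submatrix Fin.castSucc Fin.succ).det := by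
    unfold Trect
    congr 1
    ext j k
    simp only [hA, Matrix.of_apply, Matrix.submatrix_apply, Fin.coe_castSucc, Fin.val_succ]
    exact hTLc _ _ _ _ (by push_cast; omega) (by push_cast; omega)
  have h4 : Trect TL s (m + 1) (p + 1 - 1) lam = (A.submatrix Fin.succ Fin.castSucc).det := by
    unfold Trect
    congr 1
    ext j k
    simp only [hA, Matrix.of_apply, Matrix.submatrix_apply, Fin.coe_castSucc, Fin.val_succ]
    exact hTLc _ _ _ _ (by push_cast; omega) (by push_cast; omega)
  have h5 : Trect TL s (m + 1 - 1) (p + 1) lam = (A.submatrix (mid m) (mid m)).det := by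
    unfold Trect
    congr 1
    ext j k
    simp only [hA, Matrix.of_apply, Matrix.submatrix_apply, mid, Fin.coe_castSucc, Fin.val_succ]
    exact hTLc _ _ _ _ (by push_cast; omega) (by push_cast; omega)
  rw [h1, h2, h3, h4, h5, h6]
  linear_combination dj A
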